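/- Let G be a σ-compact, locally compact strongly topological gyrogroup and N the compact normal subgyrogroup obtained as N = ⋂ₙ Vₙ from a sequence of invariant symmetric neighborhoods (with V_{n+1} ⊕ V_{n+1} ⊆ Vₙ and {Vₙ} shrinking inside a given countable family of neighborhoods of 0). Then the quotient gyrogroup G/N, with the quotient topology, is a strongly topological gyrogroup that has a countable base (it is separable and metrizable). -/

import Mathlib

universe u

class Gyrogroup (G : Type u) where
  add : G → G → G
  zero : G
  neg : G → G
  gyr : G → G → G → G
  zero_add : ∀ x, add zero x = x
  add_zero : ∀ x, add x zero = x
  neg_add : ∀ x, add (neg x) x = zero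
  add_neg : ∀ x, add x (neg x) = zero
  gyr_bij : ∀ x y, Function.Bijective (gyr x y)
  gyr_add : ∀ x y a b, gyr x y (add a b) = add (gyr x y a) (gyr x y b)
  left_assoc : ∀ x y z, add x (add y z) = add (add x y) (gyr x y z)
  loop : ∀ x y, gyr (add x y) y = gyr x y

namespace Gyrogroup

variable {G : Type u}

instance [Gyrogroup G] : Add G := ⟨Gyrogroup.add⟩
instance [Gyrogroup G] : Zero G := ⟨Gyrogroup.zero⟩
instance [Gyrogroup G] : Neg G := ⟨Gyrogroup.neg⟩

/-- The gyrogroup cooperation `x ⊞ y = x ⊕ gyr[x, ⊖y](y)`. -/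
def coadd [Gyrogroup G] (x y : G) : G := x + gyr x (-y) y

/-- `S` is a subgyrogroup: contains the identity and is closed under `⊕`, `⊖` and the
gyroautomorphisms. -/
def IsSubgyro [Gyrogroup G] (S : Set G) : Prop :=
  (0 : G) ∈ S ∧ (∀ ⦃a b : G⦄, a ∈ S → b ∈ S → a + b ∈ S) ∧
    (∀ ⦃a : G⦄, a ∈ S → -a ∈ S) ∧
    ∀ ⦃a b c : G⦄, a ∈ S → b ∈ S → c ∈ S → gyr a b c ∈ S

/-- The subgyrogroup generated by `A`. -/
def gen [Gyrogroup G] (A : Set G) : Set G := ⋂₀ {S : Set G | IsSubgyro S ∧ A ⊆ S}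

/-- `N` is a normal subgyrogroup: the kernel of a gyrogroup homomorphism. -/
def IsNormalSubgyro [Gyrogroup G] (N : Set G) : Prop :=
  ∃ (H : Type u) (i : Gyrogroup H) (f : G → H),
    (∀ a b : G, f (a + b) = i.add (f a) (f b)) ∧ N = f ⁻¹' {i.zero}

/-- A (Hausdorff) topological gyrogroup. -/
class TopGyrogroup (G : Type u) [Gyrogroup G] [TopologicalSpace G] : Prop where
  t2 : T2Space G
  continuous_add : Continuous fun p : G × G => p.1 + p.2
  continuous_neg : Continuous fun x : G => -x

/-- `μ` is a neighborhood base at `0` consisting of gyr-invariant sets. -/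
def IsGyroNhdBase [Gyrogroup G] [TopologicalSpace G] (μ : Set (Set G)) : Prop :=
  (∀ U ∈ μ, U ∈ nhds (0 : G)) ∧ (∀ W ∈ nhds (0 : G), ∃ U ∈ μ, U ⊆ W) ∧
    ∀ U ∈ μ, ∀ x y : G, gyr x y '' U = U

/-- A strongly topological gyrogroup: some neighborhood base at `0` is gyr-invariant. -/
def StronglyTop (G : Type u) [Gyrogroup G] [TopologicalSpace G] : Prop :=
  ∃ μ : Set (Set G), IsGyroNhdBase μ

/-- `S` is a suitable set for `G`. -/
def IsSuitable [Gyrogroup G] [TopologicalSpace G] (S : Set G) : Prop :=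
  DiscreteTopology S ∧ IsClosed (S ∪ {(0 : G)}) ∧ Dense (gen S)

end Gyrogroup

open Gyrogroup

namespace GyroAux
open Gyrogroup

variable {G : Type u} [Gyrogroup G]

theorem add_def (a b : G) : a + b = Gyrogroup.add a b := rfl
theorem zero_def : (0 : G) = Gyrogroup.zero := rfl
theorem neg_def (a : G) : -a = Gyrogroup.neg a := rfl

theorem zero_add' (a : G) : 0 + a = a := Gyrogroup.zero_add a
theorem add_zero' (a : G) : a + 0 = a := Gyrogroup.add_zero a
theorem neg_add' (a : G) : -a + a = 0 := Gyrogroup.neg_add a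
theorem add_neg' (a : G) : a + -a = 0 := Gyrogroup.add_neg a
theorem left_assoc' (x y z : G) : x + (y + z) = (x + y) + gyr x y z :=
  Gyrogroup.left_assoc x y z
theorem loop' (x y : G) : gyr (x + y) y = gyr x y := Gyrogroup.loop x y
theorem gyr_add' (x y a b : G) : gyr x y (a + b) = gyr x y a + gyr x y b :=
  Gyrogroup.gyr_add x y a b

theorem key (a z : G) : a + (-a + z) = gyr a (-a) z := by
  rw [left_assoc', add_neg', zero_add']

theorem addL_bij (a : G) : Function.Bijective (fun z : G => a + z) := by
  have hcomp : ∀ b : G, (fun z : G => b + z) ∘ (fun z : G => -b + z) = gyr b (-b) := by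
    intro b; funext z; exact key b z
  have hsurj : ∀ b : G, Function.Surjective (fun z : G => b + z) := by
    intro b
    have := (Gyrogroup.gyr_bij b (-b)).2
    rw [← hcomp b] at this
    exact this.of_comp
  have hinj : ∀ b : G, Function.Injective (fun z : G => -b + z) := by
    intro b
    have := (Gyrogroup.gyr_bij b (-b)).1
    rw [← hcomp b] at this
    exact this.of_comp
  refine ⟨?_, hsurj a⟩
  intro x y hxy
  obtain ⟨x', hx'⟩ := hsurj (-a) x
  obtain ⟨y', hy'⟩ := hsurj (-a) y
  simp only at hx' hy'
  subst hx' hy'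
  have : gyr a (-a) x' = gyr a (-a) y' := by
    rw [← key, ← key]; exact hxy
  rw [(Gyrogroup.gyr_bij a (-a)).1 this]

theorem add_left_cancel' {a x y : G} (h : a + x = a + y) : x = y := (addL_bij a).1 h

theorem gyr_zero_left (a : G) (z : G) : gyr (0 : G) a z = z := by
  have h := left_assoc' (0 : G) a z
  rw [zero_add', zero_add'] at h
  exact (add_left_cancel' h).symm

theorem gyr_neg_self (a z : G) : gyr (-a) a z = z := by
  have h := loop' (-a) a
  rw [neg_add'] at h
  rw [← h, gyr_zero_left]

theorem neg_add_cancel_left (a x : G) : -a + (a + x) = x := by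
  rw [left_assoc', neg_add', zero_add', gyr_neg_self]

theorem gyr_self_neg (a z : G) : gyr a (-a) z = z := by
  have h := loop' a (-a)
  rw [add_neg'] at h
  rw [← h, gyr_zero_left]

theorem add_neg_cancel_left (a x : G) : a + (-a + x) = x := by
  rw [key, gyr_self_neg]

theorem eq_neg_of_add_eq_zero {a b : G} (h : a + b = 0) : b = -a := by
  have : a + b = a + -a := by rw [h, add_neg']
  exact add_left_cancel' this

theorem neg_neg' (a : G) : -(-a) = a := by
  have : -a + a = 0 := neg_add' a
  exact (eq_neg_of_add_eq_zero this).symm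

theorem gyr_zero (x y : G) : gyr x y (0 : G) = 0 := by
  have h : gyr x y (0 : G) + gyr x y 0 = gyr x y 0 + 0 := by
    rw [← gyr_add', zero_add', add_zero']
  exact add_left_cancel' h

theorem gyr_neg (x y a : G) : gyr x y (-a) = -(gyr x y a) := by
  apply eq_neg_of_add_eq_zero
  rw [← gyr_add', add_neg', gyr_zero]

theorem gyr_eq (a b c : G) : gyr a b c = -(a + b) + (a + (b + c)) := by
  conv_rhs => rw [left_assoc' a b c]
  rw [neg_add_cancel_left]

theorem right_cancel (x v : G) : (x + v) + gyr (x + v) v (-v) = x := by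
  rw [loop', ← left_assoc', add_neg', add_zero']

end GyroAux
namespace GyroAux
open Gyrogroup

section Hom
variable {G H : Type u} [Gyrogroup G] [Gyrogroup H]
variable {f : G → H} (hf : ∀ a b : G, f (a + b) = f a + f b)

include hf

theorem map_zero' : f 0 = 0 := by
  have h : f 0 + f 0 = f 0 + 0 := by
    rw [← hf, zero_add', add_zero']
  exact add_left_cancel' h

theorem map_neg' (a : G) : f (-a) = -(f a) := by
  apply eq_neg_of_add_eq_zero
  rw [← hf, add_neg', map_zero' hf]

theorem map_gyr' (a b c : G) : f (gyr a b c) = gyr (f a) (f b) (f c) := by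
  rw [gyr_eq, gyr_eq (f a), hf, hf, hf, map_neg' hf, hf]

end Hom

/-- The kernel setoid of a map. -/
def kerSetoid {G H : Type u} (f : G → H) : Setoid G :=
  ⟨fun a b => f a = f b, ⟨fun _ => rfl, Eq.symm, Eq.trans⟩⟩

variable {G H : Type u} [Gyrogroup G] [Gyrogroup H]
variable (f : G → H) (hf : ∀ a b : G, f (a + b) = f a + f b)

/-- The quotient of `G` by the kernel of `f`. -/
def Quot' : Type u := Quotient (kerSetoid f)

variable {f}

theorem rel_iff {a b : G} : (kerSetoid f).r a b ↔ f a = f b := Iff.rfl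

def mk (a : G) : Quot' f := Quotient.mk (kerSetoid f) a

theorem mk_eq_mk {a b : G} : (mk a : Quot' f) = mk b ↔ f a = f b :=
  ⟨Quotient.exact, fun h => Quotient.sound h⟩

theorem mk_surjective : Function.Surjective (mk : G → Quot' f) :=
  fun q => Quotient.inductionOn q fun a => ⟨a, rfl⟩

include hf

def qAdd : Quot' f → Quot' f → Quot' f :=
  Quotient.map₂ (· + ·) (by
    intro a a' ha b b' hb
    show f (a + b) = f (a' + b')
    rw [hf, hf, ha, hb])

def qNeg : Quot' f → Quot' f :=
  Quotient.map Neg.neg (by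
    intro a a' ha
    show f (-a) = f (-a')
    rw [map_neg' hf, map_neg' hf, ha])

def qGyr : Quot' f → Quot' f → Quot' f → Quot' f := fun p q r =>
  Quotient.liftOn₂ p q
    (fun a b => Quotient.map (gyr a b) (by
      intro c c' hc
      show f (gyr a b c) = f (gyr a b c')
      rw [map_gyr' hf, map_gyr' hf, hc]) r)
    (by
      intro a b a' b' ha hb
      induction r using Quotient.inductionOn with
      | h c =>
        apply Quotient.sound
        show f (gyr a b c) = f (gyr a' b' c)
        rw [map_gyr' hf, map_gyr' hf, ha, hb])

theorem qAdd_mk (a b : G) : qAdd hf (mk a) (mk b) = mk (a + b) := rfl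
theorem qNeg_mk (a : G) : qNeg hf (mk a) = mk (-a) := rfl
theorem qGyr_mk (a b c : G) : qGyr hf (mk a) (mk b) (mk c) = mk (gyr a b c) := rfl

def quotGyrogroup : Gyrogroup (Quot' f) where
  add := qAdd hf
  zero := mk 0
  neg := qNeg hf
  gyr := qGyr hf
  zero_add := fun q => Quotient.inductionOn q fun a => congrArg mk (zero_add' a)
  add_zero := fun q => Quotient.inductionOn q fun a => congrArg mk (add_zero' a)
  neg_add := fun q => Quotient.inductionOn q fun a => congrArg mk (neg_add' a)
  add_neg := fun q => Quotient.inductionOn q fun a => congrArg mk (add_neg' a)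
  gyr_bij := by
    intro p q
    induction p using Quotient.inductionOn with
    | h a =>
    induction q using Quotient.inductionOn with
    | h b =>
    constructor
    · intro r₁ r₂ h
      induction r₁ using Quotient.inductionOn with
      | h c₁ =>
      induction r₂ using Quotient.inductionOn with
      | h c₂ =>
      have h' : f (gyr a b c₁) = f (gyr a b c₂) := Quotient.exact h
      rw [map_gyr' hf, map_gyr' hf] at h'
      exact Quotient.sound ((Gyrogroup.gyr_bij (f a) (f b)).1 h')
    · intro r
      induction r using Quotient.inductionOn with
      | h c =>
      obtain ⟨c', hc'⟩ := (Gyrogroup.gyr_bij a b).2 c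
      exact ⟨mk c', congrArg mk hc'⟩
  gyr_add := by
    intro p q r s
    induction p using Quotient.inductionOn with
    | h a =>
    induction q using Quotient.inductionOn with
    | h b =>
    induction r using Quotient.inductionOn with
    | h c =>
    induction s using Quotient.inductionOn with
    | h d =>
    exact congrArg mk (gyr_add' a b c d)
  left_assoc := by
    intro p q r
    induction p using Quotient.inductionOn with
    | h a =>
    induction q using Quotient.inductionOn with
    | h b =>
    induction r using Quotient.inductionOn with
    | h c =>
    exact congrArg mk (left_assoc' a b c)
  loop := by
    intro p q
    induction p using Quotient.inductionOn with
    | h a =>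
    induction q using Quotient.inductionOn with
    | h b =>
    funext r
    induction r using Quotient.inductionOn with
    | h c =>
    exact congrArg mk (congrFun (loop' a b) c)

end GyroAux
namespace GyroAux
open Gyrogroup Set

section Top
variable {G : Type u} [Gyrogroup G] [TopologicalSpace G] [TopGyrogroup G]

theorem continuous_addL (a : G) : Continuous (fun z : G => a + z) :=
  TopGyrogroup.continuous_add.comp (continuous_const.prodMk continuous_id)

theorem continuous_addR (n : G) : Continuous (fun z : G => z + n) :=
  TopGyrogroup.continuous_add.comp (continuous_id.prodMk continuous_const)

theorem addL_image_eq (a : G) (S : Set G) :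
    (fun z : G => a + z) '' S = (fun z : G => -a + z) ⁻¹' S := by
  ext w
  constructor
  · rintro ⟨s, hs, rfl⟩
    simpa [neg_add_cancel_left] using hs
  · intro hw
    exact ⟨-a + w, hw, add_neg_cancel_left a w⟩

theorem isOpen_addL_image (a : G) {S : Set G} (hS : IsOpen S) :
    IsOpen ((fun z : G => a + z) '' S) := by
  rw [addL_image_eq]
  exact hS.preimage (continuous_addL (-a))

theorem exists_V_subset (V : ℕ → Set G) (hVo : ∀ n, IsOpen (V n))
    (hV0m : ∀ n, (0 : G) ∈ V n)
    (hVs : ∀ n, (fun x : G => -x) '' V n = V n)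
    (hVc : IsCompact (closure (V 0)))
    (hsub : ∀ n, Set.image2 (· + ·) (V (n + 1)) (V (n + 1)) ⊆ V n)
    (hgyr : ∀ n, ∀ x y : G, gyr x y '' V n = V n)
    {O : Set G} (hO : IsOpen O) (hNO : (⋂ n, V n) ⊆ O) : ∃ k, V k ⊆ O := by
  have hmono : ∀ n, V (n + 1) ⊆ V n := by
    intro n v hv
    exact hsub n ⟨v, hv, 0, hV0m _, add_zero' v⟩
  have hmono' : Antitone V := antitone_nat_of_succ_le hmono
  have hcl : ∀ n, closure (V (n + 2)) ⊆ V (n + 1) := by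
    intro n x hx
    have hne := mem_closure_iff.mp hx _ (isOpen_addL_image x (hVo (n + 2)))
      ⟨0, hV0m _, add_zero' x⟩
    obtain ⟨v₂, ⟨w, hw, hvw⟩, hv₂⟩ := hne
    -- hvw : x + w = v₂, hv₂ : v₂ ∈ V (n+2)
    have hnegw : -w ∈ V (n + 2) := by
      rw [← hVs (n + 2)]; exact ⟨w, hw, rfl⟩
    have hgyrw : gyr (x + w) w (-w) ∈ V (n + 2) := by
      rw [← hgyr (n + 2) (x + w) w]; exact ⟨-w, hnegw, rfl⟩
    have hx' : x = (x + w) + gyr (x + w) w (-w) := (right_cancel x w).symm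
    rw [hx']
    have hvw' : x + w = v₂ := hvw
    exact hsub _ ⟨x + w, by rwa [hvw'], gyr (x + w) w (-w), hgyrw, rfl⟩
  by_contra h
  push_neg at h
  set C : ℕ → Set G := fun k => closure (V (k + 2)) ∩ Oᶜ with hC
  have hCne : ∀ k, (C k).Nonempty := by
    intro k
    obtain ⟨x, hx, hxO⟩ := not_subset.mp (h (k + 2))
    exact ⟨x, subset_closure hx, hxO⟩
  have hCd : ∀ k, C (k + 1) ⊆ C k :=
    fun k => inter_subset_inter_left _ (closure_mono (hmono _))
  have hCcl : ∀ k, IsClosed (C k) := fun k => isClosed_closure.inter hO.isClosed_compl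
  have hC0 : IsCompact (C 0) :=
    hVc.of_isClosed_subset (hCcl 0)
      ((inter_subset_left).trans (closure_mono (hmono' (Nat.zero_le 2))))
  obtain ⟨x, hx⟩ := IsCompact.nonempty_iInter_of_sequence_nonempty_isCompact_isClosed
    C hCd hCne hC0 hCcl
  simp only [mem_iInter, hC, mem_inter_iff] at hx
  have hxN : x ∈ ⋂ n, V n := by
    refine mem_iInter.mpr fun n => ?_
    exact hmono n (hcl n (hx n).1)
  exact (hx 0).2 (hNO hxN)

end Top
end GyroAux

open GyroAux Set

theorem quotient_secondCountable {G : Type u} [Gyrogroup G] [TopologicalSpace G]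
    [TopGyrogroup G] [SigmaCompactSpace G] [LocallyCompactSpace G]
    (hst : StronglyTop G) (U : ℕ → Set G) (hU : ∀ n, U n ∈ nhds (0 : G))
    (V : ℕ → Set G)
    (hV : ∀ n, IsOpen (V n) ∧ (0 : G) ∈ V n ∧ (fun x : G => -x) '' V n = V n)
    (hV0 : IsCompact (closure (V 0)))
    (hVU : ∀ n, Set.image2 (· + ·) (V (n + 1)) (V (n + 1)) ⊆ V n ∩ U n)
    (hgyr : ∀ n, ∀ x y : G, gyr x y '' V n = V n)
    (N : Set G) (hN : N = ⋂ n, V n)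
    (hNc : IsCompact N) (hNn : IsNormalSubgyro N) :
    ∃ (Q : Type u) (iQ : Gyrogroup Q) (tQ : TopologicalSpace Q) (π : G → Q),
      (∀ a b : G, π (a + b) = iQ.add (π a) (π b)) ∧ Function.Surjective π ∧
      (@Topology.IsQuotientMap G Q _ tQ π) ∧ π ⁻¹' {iQ.zero} = N ∧
      (@StronglyTop Q iQ tQ) ∧ (@SecondCountableTopology Q tQ) := by
  classical
  obtain ⟨H, i, f, hf, hNf⟩ := hNn
  letI : Gyrogroup H := i
  have hf' : ∀ a b : G, f (a + b) = f a + f b := hf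
  letI iQ : Gyrogroup (Quot' f) := quotGyrogroup hf'
  letI tQ : TopologicalSpace (Quot' f) := TopologicalSpace.coinduced mk ‹TopologicalSpace G›
  set π : G → Quot' f := mk with hπ
  -- membership in N
  have hfN : ∀ z : G, z ∈ N ↔ f z = 0 := by
    intro z
    rw [hNf]
    exact Iff.rfl
  have hπeq : ∀ a b : G, π a = π b ↔ f a = f b := fun a b => mk_eq_mk
  have hsub : ∀ n, Set.image2 (· + ·) (V (n + 1)) (V (n + 1)) ⊆ V n :=
    fun n => (hVU n).trans inter_subset_left
  have hNV : ∀ k, N ⊆ V k := by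
    intro k z hz
    rw [hN] at hz
    exact mem_iInter.mp hz k
  have hkey : ∀ O : Set G, IsOpen O → N ⊆ O → ∃ k, V k ⊆ O := by
    intro O hO hNO
    exact exists_V_subset V (fun n => (hV n).1) (fun n => (hV n).2.1)
      (fun n => (hV n).2.2) hV0 hsub hgyr hO (hN ▸ hNO)
  have hcont : Continuous π := continuous_coinduced_rng
  -- π is an open map
  have hopen : ∀ O : Set G, IsOpen O → IsOpen (π '' O) := by
    intro O hO
    rw [show (IsOpen (π '' O)) = IsOpen (π ⁻¹' (π '' O)) from propext isOpen_coinduced]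
    have hsat : π ⁻¹' (π '' O) = ⋃ n ∈ N, (fun z : G => z + n) ⁻¹' O := by
      ext z
      simp only [mem_preimage, mem_image, mem_iUnion]
      constructor
      · rintro ⟨o, ho, hoz⟩
        have hfz : f o = f z := (hπeq o z).mp hoz
        refine ⟨-z + o, ?_, ?_⟩
        · rw [hfN]
          rw [hf', map_neg' hf', hfz, GyroAux.neg_add']
        · simpa [GyroAux.add_neg_cancel_left] using ho
      · rintro ⟨n, hn, hzn⟩
        refine ⟨z + n, hzn, ?_⟩
        rw [hπeq]
        rw [hf', (hfN n).mp hn, add_zero']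
    rw [hsat]
    exact isOpen_biUnion fun n _ => hO.preimage (continuous_addR n)
  -- preimage of zero is N
  have hzeroN : π ⁻¹' {iQ.zero} = N := by
    ext z
    have : iQ.zero = π (0 : G) := rfl
    simp only [mem_preimage, mem_singleton_iff, this, hπeq, hfN, map_zero' hf']
  -- membership of π in basic images
  have hmemC : ∀ (x : G) (m : ℕ), π x ∈ π '' ((fun z : G => x + z) '' V m) :=
    fun x m => ⟨x + 0, ⟨0, (hV m).2.1, rfl⟩, congrArg π (add_zero' x)⟩
  have hCopen : ∀ (x : G) (m : ℕ), IsOpen (π '' ((fun z : G => x + z) '' V m)) :=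
    fun x m => hopen _ (isOpen_addL_image x (hV m).1)
  -- Strongly topological
  have hstQ : StronglyTop (Quot' f) := by
    refine ⟨Set.range (fun n => π '' V n), ?_, ?_, ?_⟩
    · rintro W ⟨n, rfl⟩
      exact (hopen _ (hV n).1).mem_nhds ⟨0, (hV n).2.1, rfl⟩
    · intro W hW
      obtain ⟨W', hW'W, hW'o, hW'0⟩ := mem_nhds_iff.mp hW
      have hNsub : N ⊆ π ⁻¹' W' := by
        intro n hn
        have : π n = iQ.zero := by
          rw [show iQ.zero = π (0:G) from rfl, hπeq, (hfN n).mp hn, map_zero' hf']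
        rw [mem_preimage, this]
        exact hW'0
      obtain ⟨k, hk⟩ := hkey _ (hW'o.preimage hcont) hNsub
      exact ⟨π '' V k, ⟨k, rfl⟩,
        (image_mono (f := π) hk).trans ((image_preimage_subset π W').trans hW'W)⟩
    · rintro W ⟨n, rfl⟩ p q
      obtain ⟨a, rfl⟩ := mk_surjective p
      obtain ⟨b, rfl⟩ := mk_surjective q
      have h1 : ∀ c : G, gyr (mk a : Quot' f) (mk b) (mk c) = mk (gyr a b c) :=
        fun c => qGyr_mk hf' a b c
      calc gyr (mk a : Quot' f) (mk b) '' (π '' V n)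
          = (fun c : G => gyr (mk a : Quot' f) (mk b) (π c)) '' V n := by
            rw [image_image]
        _ = (fun c : G => π (gyr a b c)) '' V n := by
            simp only [hπ, h1]
        _ = π '' (gyr a b '' V n) := by rw [← image_image]
        _ = π '' V n := by rw [hgyr n a b]
  -- Second countability
  haveI : SecondCountableTopology (Quot' f) := by
    set C : ℕ → G → Set (Quot' f) := fun m x => π '' ((fun z : G => x + z) '' V m) with hCdef
    have hcover : ∀ (m j : ℕ), π '' (compactCovering G j) ⊆ ⋃ x : G, C m x := by
      rintro m j q ⟨y, _, rfl⟩
      exact mem_iUnion.mpr ⟨y, hmemC y m⟩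
    have hfin : ∀ (m j : ℕ), ∃ t : Finset G,
        π '' (compactCovering G j) ⊆ ⋃ x ∈ t, C m x := by
      intro m j
      exact ((isCompact_compactCovering G j).image hcont).elim_finite_subcover
        (C m) (fun x => hCopen x m) (hcover m j)
    choose T hT using hfin
    set D : ℕ → Set G := fun m => ⋃ j, (T m j : Set G) with hDdef
    have hDc : ∀ m, (D m).Countable := fun m =>
      countable_iUnion fun j => (T m j).countable_toSet
    have hDcover : ∀ (m : ℕ) (q : Quot' f), ∃ x ∈ D m, q ∈ C m x := by
      intro m q
      obtain ⟨y, rfl⟩ := mk_surjective q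
      have hy : y ∈ ⋃ j, compactCovering G j := by
        rw [iUnion_compactCovering]; trivial
      obtain ⟨j, hj⟩ := mem_iUnion.mp hy
      have : (π y : Quot' f) ∈ ⋃ x ∈ T m j, C m x := hT m j ⟨y, hj, rfl⟩
      obtain ⟨x, hx, hqx⟩ := mem_iUnion₂.mp this
      exact ⟨x, mem_iUnion.mpr ⟨j, hx⟩, hqx⟩
    set B : Set (Set (Quot' f)) := ⋃ m, (C m) '' (D m) with hBdef
    have hBc : B.Countable := countable_iUnion fun m => (hDc m).image (C m)
    have hbasis : TopologicalSpace.IsTopologicalBasis B := by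
      apply TopologicalSpace.isTopologicalBasis_of_isOpen_of_nhds
      · rintro s hs
        obtain ⟨m, hm⟩ := mem_iUnion.mp hs
        obtain ⟨x, _, rfl⟩ := hm
        exact hCopen x m
      · intro q W hqW hWo
        obtain ⟨y, rfl⟩ := mk_surjective q
        have hO : IsOpen (π ⁻¹' W) := hWo.preimage hcont
        have hO' : IsOpen ((fun v : G => y + v) ⁻¹' (π ⁻¹' W)) :=
          hO.preimage (continuous_addL y)
        have hNO' : N ⊆ (fun v : G => y + v) ⁻¹' (π ⁻¹' W) := by
          intro n hn
          have : π (y + n) = π y := by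
            rw [hπeq, hf', (hfN n).mp hn, add_zero']
          simp only [mem_preimage, this]
          exact hqW
        obtain ⟨m₀, hm₀⟩ := hkey _ hO' hNO'
        obtain ⟨x, hxD, hqC⟩ := hDcover (m₀ + 2) (π y)
        refine ⟨C (m₀ + 2) x, mem_iUnion.mpr ⟨m₀ + 2, ⟨x, hxD, rfl⟩⟩, hqC, ?_⟩
        -- C (m₀+2) x ⊆ W
        obtain ⟨w, ⟨v₀, hv₀, hwv₀⟩, hwy⟩ := hqC
        have hwv₀' : x + v₀ = w := hwv₀
        have hfxy : f (x + v₀) = f y := by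
          rw [hwv₀']; exact (hπeq w y).mp hwy
        set n : G := -y + (x + v₀) with hn
        have hnN : n ∈ N := by
          rw [hfN, hn, hf', map_neg' hf', hfxy, GyroAux.neg_add']
        have hyn : y + n = x + v₀ := GyroAux.add_neg_cancel_left y (x + v₀)
        rintro s ⟨w', ⟨v, hv, hw'v⟩, rfl⟩
        have hw'v' : x + v = w' := hw'v
        rw [← hw'v']
        -- show π (x + v) ∈ W
        have hnegv₀ : -v₀ ∈ V (m₀ + 2) := by
          rw [← (hV (m₀ + 2)).2.2]; exact ⟨v₀, hv₀, rfl⟩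
        have hc' : -v₀ + v ∈ V (m₀ + 1) :=
          hsub (m₀ + 1) ⟨-v₀, hnegv₀, v, hv, rfl⟩
        have hd : gyr x v₀ (-v₀ + v) ∈ V (m₀ + 1) := by
          rw [← hgyr (m₀ + 1) x v₀]; exact ⟨-v₀ + v, hc', rfl⟩
        obtain ⟨e, he, hge⟩ : ∃ e ∈ V (m₀ + 1), gyr y n e = gyr x v₀ (-v₀ + v) := by
          have := hgyr (m₀ + 1) y n
          rw [← this] at hd
          obtain ⟨e, he, hge⟩ := hd
          exact ⟨e, he, hge⟩
        have hne : n + e ∈ V m₀ := hsub m₀ ⟨n, hNV (m₀ + 1) hnN, e, he, rfl⟩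
        have hxv : x + v = y + (n + e) := by
          calc x + v = x + (v₀ + (-v₀ + v)) := by rw [GyroAux.add_neg_cancel_left]
            _ = (x + v₀) + gyr x v₀ (-v₀ + v) := left_assoc' x v₀ (-v₀ + v)
            _ = (y + n) + gyr y n e := by rw [hyn, hge]
            _ = y + (n + e) := (left_assoc' y n e).symm
        have : x + v ∈ π ⁻¹' W := by
          rw [hxv]
          exact hm₀ hne
        exact this
    exact hbasis.secondCountableTopology hBc
  exact ⟨Quot' f, iQ, tQ, π, fun a b => rfl, mk_surjective,
    ⟨⟨rfl⟩, mk_surjective⟩, hzeroN, hstQ, inferInstance⟩
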